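/- Let K be a number field. For every nonzero fractional ideal 𝔞 of 𝒪_K and every s = (s₁, …, sₙ) ∈ ℝⁿ the following hold. (Existence) There exist h ∈ K^* and an f-representation (𝔟, t) with 𝔟 = (1/h)𝔞 and tᵢ = sᵢ − log wᵢ(h) for all 1 ≤ i ≤ n. (Uniqueness) If (𝔟, t) and (𝔟', t') are f-representations for which there exist h, h' ∈ K^* with 𝔟 = (1/h)𝔞, tᵢ = sᵢ − log wᵢ(h), 𝔟' = (1/h')𝔞, and t'ᵢ = sᵢ − log wᵢ(h') for all i, then 𝔟 ∼ 𝔟' and t = t'. (Thus every Arakelov divisor class of K is represented by exactly one f-representation up to the equivalence ∼.) -/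

import Mathlib

open NumberField
open scoped nonZeroDivisors NNReal ENNReal Classical
open FractionalIdeal MeasureTheory

/-- Lexicographic comparison of real tuples: `a ≤ₗₑₓ b`. -/
def lexLe {m : ℕ} (a b : Fin m → ℝ) : Prop :=
  a = b ∨ ∃ i : Fin m, a i < b i ∧ ∀ j : Fin m, j < i → a j = b j

/-- The vector of absolute values of `h` at the infinite places, the distinguished place `w₀`
first. -/
def absVec {K : Type*} [Field K] [NumberField K] {n : ℕ}
    (w₀ : InfinitePlace K) (w : Fin n → InfinitePlace K) (h : K) : Fin (n + 1) → ℝ :=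
  Fin.cons (w₀ h) (fun i => w i h)

/-- The total preorder `≼` on `K^*`: `h ≼ h'` iff the vector of absolute values of `h` is
lexicographically at most that of `h'` (distinguished place first). -/
def preceq {K : Type*} [Field K] [NumberField K] {n : ℕ}
    (w₀ : InfinitePlace K) (w : Fin n → InfinitePlace K) (h h' : K) : Prop :=
  lexLe (absVec w₀ w h) (absVec w₀ w h')

/-- The box `B(𝔟, (t, ℓ)) = {h ∈ 𝔟 : w₀(h) ≤ exp ℓ and wᵢ(h) ≤ exp tᵢ for 1 ≤ i ≤ n}`. -/
def box {K : Type*} [Field K] [NumberField K] {n : ℕ}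
    (w₀ : InfinitePlace K) (w : Fin n → InfinitePlace K)
    (𝔟 : FractionalIdeal (𝓞 K)⁰ K) (t : Fin n → ℝ) (ℓ : ℝ) : Set K :=
  {h : K | h ∈ 𝔟 ∧ w₀ h ≤ Real.exp ℓ ∧ ∀ i : Fin n, w i h ≤ Real.exp (t i)}

/-- A pair `(𝔟, t)` is an *f-representation* if `1 ∈ B(𝔟, (t, 0))` and `1` is a smallest
element of `B(𝔟, (t, 0)) ∖ {0}` with respect to `≼`. -/
def IsFRep {K : Type*} [Field K] [NumberField K] {n : ℕ}
    (w₀ : InfinitePlace K) (w : Fin n → InfinitePlace K)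
    (𝔟 : FractionalIdeal (𝓞 K)⁰ K) (t : Fin n → ℝ) : Prop :=
  (1 : K) ∈ box w₀ w 𝔟 t 0 ∧
  ∀ h ∈ box w₀ w 𝔟 t 0, h ≠ 0 → preceq w₀ w 1 h

/-- Two nonzero fractional ideals are *equivalent* if they differ by a principal ideal whose
generator has absolute value `1` at every infinite place. -/
def EquivIdeal {K : Type*} [Field K] [NumberField K]
    (𝔟 𝔟' : FractionalIdeal (𝓞 K)⁰ K) : Prop :=
  ∃ g : K, g ≠ 0 ∧ 𝔟 = FractionalIdeal.spanSingleton (𝓞 K)⁰ g * 𝔟' ∧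
    ∀ v : InfinitePlace K, v g = 1

section absVecLemmas
variable {K : Type*} [Field K] [NumberField K] {n : ℕ}
    (w₀ : InfinitePlace K) (w : Fin n → InfinitePlace K)

lemma absVec_zero (x : K) : absVec w₀ w x 0 = w₀ x := rfl

lemma absVec_succ (x : K) (i : Fin n) : absVec w₀ w x i.succ = w i x := by
  simp [absVec]

lemma absVec_one : absVec w₀ w (1:K) = fun _ => (1:ℝ) := by
  funext j
  induction j using Fin.cases with
  | zero => simp [absVec_zero]
  | succ i => simp [absVec_succ]

lemma absVec_pos {x : K} (hx : x ≠ 0) : ∀ j, 0 < absVec w₀ w x j := by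
  intro j
  induction j using Fin.cases with
  | zero => rw [absVec_zero]; exact InfinitePlace.pos_iff.mpr hx
  | succ i => rw [absVec_succ]; exact InfinitePlace.pos_iff.mpr hx

lemma absVec_div (x y : K) :
    absVec w₀ w (x / y) = fun j => absVec w₀ w x j / absVec w₀ w y j := by
  funext j
  induction j using Fin.cases with
  | zero => simp only [absVec_zero]; exact map_div₀ _ _ _
  | succ i => simp only [absVec_succ]; exact map_div₀ _ _ _

lemma absVec_mul (x y : K) :
    absVec w₀ w (x * y) = fun j => absVec w₀ w x j * absVec w₀ w y j := by
  funext j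
  induction j using Fin.cases with
  | zero => simp only [absVec_zero]; exact _root_.map_mul _ _ _
  | succ i => simp only [absVec_succ]; exact _root_.map_mul _ _ _

end absVecLemmas

lemma lexLe_div {m : ℕ} {a b : Fin m → ℝ} (ha : ∀ j, 0 < a j) (h : lexLe a b) :
    lexLe (fun _ => (1:ℝ)) (fun j => b j / a j) := by
  rcases h with rfl | ⟨i, hlt, hj⟩
  · exact Or.inl (funext fun j => (div_self (ha j).ne').symm)
  · exact Or.inr ⟨i, show (1:ℝ) < b i / a i from (one_lt_div (ha i)).mpr hlt,
      fun j hji => by show (1:ℝ) = b j / a j; rw [← hj j hji, div_self (ha j).ne']⟩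

lemma first_one {m : ℕ} {u : Fin (m+1) → ℝ} (hle : u 0 ≤ 1)
    (h1 : lexLe (fun _ => (1:ℝ)) u) : u 0 = 1 := by
  rcases h1 with h1 | ⟨i, hi, hji⟩
  · exact (congrFun h1 0).symm
  · rcases eq_or_ne i 0 with rfl | hne
    · exact absurd (lt_of_lt_of_le hi hle) (lt_irrefl 1)
    · exact (hji 0 (Fin.pos_of_ne_zero hne)).symm

lemma lex_inv_eq {m : ℕ} {u : Fin m → ℝ} (h1 : lexLe (fun _ => (1:ℝ)) u)
    (h2 : lexLe (fun _ => (1:ℝ)) (fun j => (u j)⁻¹)) : u = fun _ => 1 := by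
  rcases h1 with h1 | ⟨i, hi, hji⟩
  · exact h1.symm
  exfalso
  rcases h2 with h2 | ⟨i', hi', hji'⟩
  · have h3 : (1:ℝ) = (u i)⁻¹ := congrFun h2 i
    have h4 : u i = 1 := by rw [eq_comm, inv_eq_one] at h3; exact h3
    simp only [h4] at hi; exact lt_irrefl 1 hi
  rcases lt_trichotomy i i' with hlt | rfl | hlt
  · have h4 : (1:ℝ) = (u i)⁻¹ := hji' i hlt
    rw [eq_comm, inv_eq_one] at h4
    simp only [h4] at hi; exact lt_irrefl 1 hi
  · have h5 : (0:ℝ) < u i := lt_trans one_pos hi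
    have h6 : (1:ℝ) * 1 < u i * (u i)⁻¹ := mul_lt_mul'' hi hi' zero_le_one zero_le_one
    rw [mul_inv_cancel₀ h5.ne', one_mul] at h6
    exact lt_irrefl 1 h6
  · have h4 : (1:ℝ) = u i' := hji i' hlt
    simp only [← h4] at hi'
    simp at hi'


lemma step_lemma {K : Type*} [Field K] [NumberField K] {n : ℕ}
    (w₀ : InfinitePlace K) (w : Fin n → InfinitePlace K)
    (𝔞 : FractionalIdeal (𝓞 K)⁰ K) {h h' : K} {t s : Fin n → ℝ}
    (hh0 : h ≠ 0) (hh'0 : h' ≠ 0) (hmem' : h' ∈ 𝔞)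
    (hrep : IsFRep w₀ w (spanSingleton (𝓞 K)⁰ h⁻¹ * 𝔞) t)
    (ht : ∀ i, t i = s i - Real.log (w i h))
    (hbound' : ∀ i, w i h' ≤ Real.exp (s i))
    (hle : w₀ h' ≤ w₀ h) :
    lexLe (fun _ => (1:ℝ)) (fun j => absVec w₀ w h' j / absVec w₀ w h j) := by
  have hmemb : h' / h ∈ box w₀ w (spanSingleton (𝓞 K)⁰ h⁻¹ * 𝔞) t 0 := by
    refine ⟨?_, ?_, ?_⟩
    · rw [mem_singleton_mul]
      exact ⟨h', hmem', by rw [div_eq_mul_inv, mul_comm]⟩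
    · rw [map_div₀, Real.exp_zero]
      exact (div_le_one (InfinitePlace.pos_iff.mpr hh0)).mpr hle
    · intro i
      rw [map_div₀, ht i, Real.exp_sub, Real.exp_log (InfinitePlace.pos_iff.mpr hh0)]
      have hp : (0:ℝ) < w i h := InfinitePlace.pos_iff.mpr hh0
      exact (div_le_div_iff_of_pos_right hp).mpr (hbound' i)
  have hg := hrep.2 (h' / h) hmemb (div_ne_zero hh'0 hh0)
  unfold preceq at hg
  rw [absVec_one, absVec_div] at hg
  exact hg





lemma lexLe_refl {m : ℕ} (a : Fin m → ℝ) : lexLe a a := Or.inl rfl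

lemma lexLe_total {m : ℕ} (a b : Fin m → ℝ) : lexLe a b ∨ lexLe b a := by
  by_cases hab : a = b
  · exact Or.inl (Or.inl hab)
  · obtain ⟨i, hi, hmin⟩ := Set.exists_min_image {i : Fin m | a i ≠ b i} id (Set.toFinite _)
      (Function.ne_iff.1 hab)
    have hj : ∀ j, j < i → a j = b j := fun j hj => by
      by_contra hc; exact absurd (hmin j hc) (not_le.mpr hj)
    rcases lt_or_gt_of_ne hi with hlt | hlt
    · exact Or.inl (Or.inr ⟨i, hlt, hj⟩)
    · exact Or.inr (Or.inr ⟨i, hlt, fun j hj' => (hj j hj').symm⟩)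

lemma lexLe_trans {m : ℕ} {a b c : Fin m → ℝ} (h1 : lexLe a b) (h2 : lexLe b c) : lexLe a c := by
  rcases h1 with rfl | ⟨i, hi, hji⟩
  · exact h2
  rcases h2 with rfl | ⟨i', hi', hji'⟩
  · exact Or.inr ⟨i, hi, hji⟩
  rcases lt_trichotomy i i' with hlt | rfl | hlt
  · exact Or.inr ⟨i, by rw [← hji' i hlt]; exact hi,
      fun j hj => (hji j hj).trans (hji' j (hj.trans hlt))⟩
  · exact Or.inr ⟨i, hi.trans hi', fun j hj => (hji j hj).trans (hji' j hj)⟩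
  · exact Or.inr ⟨i', by rw [hji i' hlt]; exact hi', fun j hj => (hji j (hj.trans hlt)).trans (hji' j hj)⟩

lemma exists_lexLe_min_finset {α : Type*} {m : ℕ} (f : α → Fin m → ℝ) (s : Finset α)
    (hn : s.Nonempty) : ∃ a ∈ s, ∀ b ∈ s, lexLe (f a) (f b) := by
  induction s using Finset.induction_on with
  | empty => exact absurd hn (by simp)
  | @insert x t hx ih =>
    rcases t.eq_empty_or_nonempty with rfl | ht
    · exact ⟨x, by simp, by simp [lexLe_refl]⟩
    · obtain ⟨a, ha, hmin⟩ := ih ht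
      rcases lexLe_total (f x) (f a) with hle | hle
      · refine ⟨x, Finset.mem_insert_self _ _, fun b hb => ?_⟩
        rcases Finset.mem_insert.mp hb with rfl | hb
        · exact lexLe_refl _
        · exact lexLe_trans hle (hmin b hb)
      · refine ⟨a, Finset.mem_insert_of_mem ha, fun b hb => ?_⟩
        rcases Finset.mem_insert.mp hb with rfl | hb
        · exact hle
        · exact hmin b hb

lemma exists_lexLe_min {α : Type*} {m : ℕ} (f : α → Fin m → ℝ) {s : Set α}
    (hs : s.Finite) (hn : s.Nonempty) : ∃ a ∈ s, ∀ b ∈ s, lexLe (f a) (f b) := by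
  obtain ⟨a, ha, hmin⟩ := exists_lexLe_min_finset f hs.toFinset (by simpa using hn)
  exact ⟨a, by simpa using ha, fun b hb => hmin b (by simpa using hb)⟩

lemma finite_bdd {K : Type*} [Field K] [NumberField K] (𝔞 : FractionalIdeal (𝓞 K)⁰ K) (C : ℝ) :
    {x : K | x ∈ 𝔞 ∧ ∀ v : InfinitePlace K, v x ≤ C}.Finite := by
  obtain ⟨d, hd, hint⟩ := 𝔞.isFractional
  have hd0 : (algebraMap (𝓞 K) K) d ≠ 0 := by
    have : d ≠ 0 := nonZeroDivisors.ne_zero hd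
    simpa using this
  set dK : K := algebraMap (𝓞 K) K d with hdK
  set D : ℝ := ∑ v : InfinitePlace K, v dK with hD
  refine Set.Finite.of_finite_image (f := fun x => dK * x) ?_ (fun x _ y _ hxy => mul_left_cancel₀ hd0 hxy)
  refine Set.Finite.subset (NumberField.Embeddings.finite_of_norm_le K ℂ (D * max C 0)) ?_
  rintro _ ⟨x, ⟨hx𝔞, hxC⟩, rfl⟩
  constructor
  · obtain ⟨c, hc⟩ := hint x hx𝔞
    rw [Algebra.smul_def] at hc
    show IsIntegral ℤ (dK * x)
    rw [hdK, ← hc]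
    exact NumberField.RingOfIntegers.isIntegral_coe c
  · intro φ
    have h1 : ‖φ (dK * x)‖ = (InfinitePlace.mk φ) dK * (InfinitePlace.mk φ) x := by
      rw [_root_.map_mul]
      simp [InfinitePlace.apply]
    rw [h1]
    have h2 : (InfinitePlace.mk φ) dK ≤ D := by
      rw [hD]
      exact Finset.single_le_sum (f := fun v : InfinitePlace K => v dK)
        (fun v _ => AbsoluteValue.nonneg _ _) (Finset.mem_univ _)
    have h3 : (InfinitePlace.mk φ) x ≤ max C 0 := le_trans (hxC _) (le_max_left _ _)
    exact mul_le_mul h2 h3 (AbsoluteValue.nonneg _ _) (le_trans (AbsoluteValue.nonneg _ _) h2)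

lemma exists_small {K : Type*} [Field K] [NumberField K] (𝔞 : FractionalIdeal (𝓞 K)⁰ K)
    (h𝔞 : 𝔞 ≠ 0) (w₀ : InfinitePlace K) (c : InfinitePlace K → ℝ) (hc : ∀ v, 0 < c v) :
    ∃ x, x ∈ 𝔞 ∧ x ≠ 0 ∧ ∀ v, v ≠ w₀ → v x ≤ c v := by
  set I : (FractionalIdeal (𝓞 K)⁰ K)ˣ := Units.mk0 𝔞 h𝔞 with hI
  obtain ⟨N, hN⟩ := ENNReal.exists_nat_gt (mixedEmbedding.minkowskiBound_lt_top K I).ne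
  obtain ⟨g, hg1, hg2⟩ := mixedEmbedding.adjust_f K (f := fun v => (c v).toNNReal) (w₁ := w₀)
    ((N : ℝ≥0) + 1) (fun v _ => by simp [Real.toNNReal_eq_zero, not_le.mpr (hc v)])
  have hvol : mixedEmbedding.minkowskiBound K I < MeasureTheory.volume (mixedEmbedding.convexBodyLT K g) := by
    rw [mixedEmbedding.convexBodyLT_volume]
    rw [hg2]
    calc mixedEmbedding.minkowskiBound K I < (N : ℝ≥0∞) := hN
    _ ≤ (((N : ℝ≥0) + 1 : ℝ≥0) : ℝ≥0∞) := by
        push_cast; exact le_add_of_nonneg_right zero_le_one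
    _ ≤ _ := le_mul_of_one_le_left _root_.zero_le (by
        exact_mod_cast mixedEmbedding.one_le_convexBodyLTFactor K)
  obtain ⟨x, hx, hx0, hxlt⟩ := mixedEmbedding.exists_ne_zero_mem_ideal_lt K I hvol
  refine ⟨x, by simpa [hI] using hx, hx0, fun v hv => ?_⟩
  have := hxlt v
  rw [hg1 v hv] at this
  calc v x ≤ ((c v).toNNReal : ℝ) := le_of_lt this
  _ = c v := Real.coe_toNNReal _ (hc v).le



/-- Let `K` be a number field with infinite places `w₀, w₁, …, wₙ`. For
every nonzero fractional ideal `𝔞` and every `s ∈ ℝⁿ`: (Existence) there are `h ∈ K^*` and an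
f-representation `(𝔟, t)` with `𝔟 = (1/h)𝔞` and `tᵢ = sᵢ − log wᵢ(h)`. (Uniqueness) any two
f-representations obtained this way from `(𝔞, s)` satisfy `𝔟 ∼ 𝔟'` and `t = t'`. Thus every
Arakelov divisor class is represented by exactly one f-representation up to `∼`. -/
theorem stmt17 {K : Type*} [Field K] [NumberField K] {n : ℕ}
    (w₀ : InfinitePlace K) (w : Fin n → InfinitePlace K)
    (hw : Function.Bijective (Fin.cons w₀ w : Fin (n + 1) → InfinitePlace K))
    (𝔞 : FractionalIdeal (𝓞 K)⁰ K) (h𝔞 : 𝔞 ≠ 0) (s : Fin n → ℝ) :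
    (∃ (h : K) (t : Fin n → ℝ), h ≠ 0 ∧
      IsFRep w₀ w (FractionalIdeal.spanSingleton (𝓞 K)⁰ h⁻¹ * 𝔞) t ∧
      ∀ i : Fin n, t i = s i - Real.log (w i h)) ∧
    (∀ (𝔟 𝔟' : FractionalIdeal (𝓞 K)⁰ K) (t t' : Fin n → ℝ),
      IsFRep w₀ w 𝔟 t → IsFRep w₀ w 𝔟' t' →
      (∃ h : K, h ≠ 0 ∧ 𝔟 = FractionalIdeal.spanSingleton (𝓞 K)⁰ h⁻¹ * 𝔞 ∧
        ∀ i : Fin n, t i = s i - Real.log (w i h)) →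
      (∃ h' : K, h' ≠ 0 ∧ 𝔟' = FractionalIdeal.spanSingleton (𝓞 K)⁰ h'⁻¹ * 𝔞 ∧
        ∀ i : Fin n, t' i = s i - Real.log (w i h')) →
      EquivIdeal 𝔟 𝔟' ∧ t = t') := by
  have hbound_of_rep : ∀ (x : K), x ≠ 0 →
      ∀ (t : Fin n → ℝ), IsFRep w₀ w (FractionalIdeal.spanSingleton (𝓞 K)⁰ x⁻¹ * 𝔞) t →
      (∀ i, t i = s i - Real.log (w i x)) →
      x ∈ 𝔞 ∧ ∀ i, w i x ≤ Real.exp (s i) := by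
    intro x hx0 t hrep ht
    constructor
    · have h1 := hrep.1.1
      rw [FractionalIdeal.mem_singleton_mul] at h1
      obtain ⟨y, hy, hxy⟩ := h1
      have hyx : y = x := by
        field_simp at hxy
        exact hxy.symm
      rwa [← hyx]
    · intro i
      have h2 := hrep.1.2.2 i
      rw [_root_.map_one, ht i, Real.exp_sub, Real.exp_log (InfinitePlace.pos_iff.mpr hx0),
        one_le_div (InfinitePlace.pos_iff.mpr hx0)] at h2
      exact h2
  constructor
  · -- Existence
    set e := Equiv.ofBijective _ hw with he
    set c : InfinitePlace K → ℝ := fun v => Real.exp (Fin.cases 0 s (e.symm v)) with hc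
    have hcpos : ∀ v, 0 < c v := fun v => Real.exp_pos _
    have hcw : ∀ i : Fin n, c (w i) = Real.exp (s i) := by
      intro i
      have happ : e (Fin.succ i) = w i := by
        rw [he]
        show (Fin.cons w₀ w : Fin (n + 1) → InfinitePlace K) (Fin.succ i) = w i
        simp
      have hsymm : e.symm (w i) = Fin.succ i := by
        rw [Equiv.symm_apply_eq]
        exact happ.symm
      rw [hc]
      simp only [hsymm, Fin.cases_succ]
    have hwne : ∀ i : Fin n, w i ≠ w₀ := by
      intro i hiw
      have h0 : (Fin.cons w₀ w : Fin (n + 1) → InfinitePlace K) (Fin.succ i) =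
          (Fin.cons w₀ w : Fin (n + 1) → InfinitePlace K) 0 := by
        simpa using hiw
      exact absurd (hw.injective h0) (by simp [Fin.succ_ne_zero])
    obtain ⟨x₀, hx₀𝔞, hx₀0, hx₀⟩ := exists_small 𝔞 h𝔞 w₀ c hcpos
    have hx₀s : ∀ i, w i x₀ ≤ Real.exp (s i) := fun i => (hcw i) ▸ hx₀ _ (hwne i)
    set F : Set K := {x | x ∈ 𝔞 ∧ x ≠ 0 ∧ w₀ x ≤ w₀ x₀ ∧ ∀ i, w i x ≤ Real.exp (s i)}
      with hF
    have hFfin : F.Finite := by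
      apply Set.Finite.subset (finite_bdd 𝔞 (w₀ x₀ + ∑ i, Real.exp (s i)))
      rintro x ⟨hx1, _, hx3, hx4⟩
      refine ⟨hx1, fun v => ?_⟩
      obtain ⟨j, rfl⟩ := hw.surjective v
      have hsum : (0:ℝ) ≤ ∑ i, Real.exp (s i) :=
        Finset.sum_nonneg fun i _ => (Real.exp_pos _).le
      have h0 : (0:ℝ) ≤ w₀ x₀ := AbsoluteValue.nonneg _ _
      induction j using Fin.cases with
      | zero => simpa using by linarith [hx3]
      | succ i =>
        have hi : Real.exp (s i) ≤ ∑ i, Real.exp (s i) :=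
          Finset.single_le_sum (fun j _ => (Real.exp_pos _).le) (Finset.mem_univ i)
        simpa using by linarith [hx4 i]
    obtain ⟨h, hhF, hhmin⟩ := exists_lexLe_min (absVec w₀ w) hFfin
      ⟨x₀, hx₀𝔞, hx₀0, le_rfl, hx₀s⟩
    obtain ⟨hh𝔞, hh0, hhw₀, hhs⟩ := hhF
    have hhpos : ∀ i : Fin n, (0:ℝ) < w i h := fun i => InfinitePlace.pos_iff.mpr hh0
    have hexp : ∀ i, Real.exp (s i - Real.log (w i h)) = Real.exp (s i) / w i h := by
      intro i
      rw [Real.exp_sub, Real.exp_log (hhpos i)]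
    refine ⟨h, fun i => s i - Real.log (w i h), hh0, ⟨⟨?_, ?_, ?_⟩, ?_⟩, fun i => rfl⟩
    · rw [FractionalIdeal.mem_singleton_mul]
      exact ⟨h, hh𝔞, by field_simp⟩
    · simp
    · intro i
      rw [_root_.map_one, hexp i, one_le_div (hhpos i)]
      exact hhs i
    · rintro g ⟨hg𝔟, hgw₀, hgw⟩ hg0
      rw [FractionalIdeal.mem_singleton_mul] at hg𝔟
      obtain ⟨y, hy𝔞, hgy⟩ := hg𝔟
      have hyg : y = h * g := by rw [hgy]; field_simp
      have hy0 : y ≠ 0 := by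
        rintro rfl
        rw [hgy] at hg0
        simp at hg0
      have hyF : y ∈ F := by
        refine ⟨hy𝔞, hy0, ?_, ?_⟩
        · calc w₀ y = w₀ h * w₀ g := by rw [hyg, _root_.map_mul]
          _ ≤ w₀ h * 1 := by
              refine mul_le_mul_of_nonneg_left ?_ (AbsoluteValue.nonneg _ _)
              simpa using hgw₀
          _ = w₀ h := mul_one _
          _ ≤ w₀ x₀ := hhw₀
        · intro i
          calc w i y = w i h * w i g := by rw [hyg, _root_.map_mul]
          _ ≤ w i h * (Real.exp (s i) / w i h) := by
              refine mul_le_mul_of_nonneg_left ?_ (AbsoluteValue.nonneg _ _)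
              rw [← hexp i]; exact hgw i
          _ = Real.exp (s i) := by
              rw [mul_comm, div_mul_cancel₀ _ (hhpos i).ne']
      have hlex := hhmin y hyF
      unfold preceq
      rw [absVec_one]
      have hgvec : absVec w₀ w g = fun j => absVec w₀ w y j / absVec w₀ w h j := by
        funext j
        have hthis : absVec w₀ w y j = absVec w₀ w h j * absVec w₀ w g j := by
          rw [hyg]; exact congrFun (absVec_mul w₀ w h g) j
        rw [hthis, mul_comm, mul_div_assoc, div_self (absVec_pos w₀ w hh0 j).ne', mul_one]
      rw [hgvec]
      exact lexLe_div (absVec_pos w₀ w hh0) hlex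
  · -- Uniqueness
    rintro 𝔟 𝔟' t t' hrep hrep' ⟨h, hh0, rfl, ht⟩ ⟨h', hh'0, rfl, ht'⟩
    obtain ⟨hmem, hbound⟩ := hbound_of_rep h hh0 t hrep ht
    obtain ⟨hmem', hbound'⟩ := hbound_of_rep h' hh'0 t' hrep' ht'
    set u : Fin (n+1) → ℝ := fun j => absVec w₀ w h' j / absVec w₀ w h j with hu
    have hupos : ∀ j, 0 < u j := fun j =>
      div_pos (absVec_pos w₀ w hh'0 j) (absVec_pos w₀ w hh0 j)
    have huinv : (fun j => absVec w₀ w h j / absVec w₀ w h' j) = fun j => (u j)⁻¹ := by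
      funext j; rw [hu]; simp [inv_div]
    have hu0eq : u 0 = 1 := by
      rcases le_total (w₀ h') (w₀ h) with hle | hle
      · refine first_one ?_ (step_lemma w₀ w 𝔞 hh0 hh'0 hmem' hrep ht hbound' hle)
        rw [hu]
        simp only [absVec_zero]
        exact (div_le_one (InfinitePlace.pos_iff.mpr hh0)).mpr hle
      · have hstep := step_lemma w₀ w 𝔞 hh'0 hh0 hmem hrep' ht' hbound hle
        rw [huinv] at hstep
        have : (u 0)⁻¹ = 1 := by
          refine first_one ?_ hstep
          show (u 0)⁻¹ ≤ 1
          rw [hu]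
          simp only [absVec_zero, inv_div]
          exact (div_le_one (InfinitePlace.pos_iff.mpr hh'0)).mpr hle
        rwa [inv_eq_one] at this
    have heq0 : w₀ h' = w₀ h := by
      have := hu0eq
      rw [hu] at this
      simp only [absVec_zero] at this
      exact (div_eq_one_iff_eq (InfinitePlace.pos_iff.mpr hh0).ne').mp this
    have L1 := step_lemma w₀ w 𝔞 hh0 hh'0 hmem' hrep ht hbound' heq0.le
    have L2 := step_lemma w₀ w 𝔞 hh'0 hh0 hmem hrep' ht' hbound heq0.ge
    rw [huinv] at L2
    have hu1 : u = fun _ => 1 := lex_inv_eq L1 L2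
    have habs : ∀ j, absVec w₀ w h' j = absVec w₀ w h j := by
      intro j
      have := congrFun hu1 j
      rw [hu] at this
      simp only at this
      exact (div_eq_one_iff_eq (absVec_pos w₀ w hh0 j).ne').mp this
    constructor
    · refine ⟨h' / h, div_ne_zero hh'0 hh0, ?_, ?_⟩
      · rw [← mul_assoc, FractionalIdeal.spanSingleton_mul_spanSingleton]
        congr 1
        rw [div_eq_mul_inv, mul_comm h' h⁻¹, mul_assoc, mul_inv_cancel₀ hh'0, mul_one]
      · intro v
        obtain ⟨j, rfl⟩ := hw.surjective v
        induction j using Fin.cases with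
        | zero =>
          show w₀ (h' / h) = 1
          rw [map_div₀, heq0, div_self (InfinitePlace.pos_iff.mpr hh0).ne']
        | succ i =>
          show w i (h' / h) = 1
          have := habs i.succ
          rw [absVec_succ, absVec_succ] at this
          rw [map_div₀, this, div_self (InfinitePlace.pos_iff.mpr hh0).ne']
    · funext i
      have hwi : w i h' = w i h := by
        have := habs i.succ
        rwa [absVec_succ, absVec_succ] at this
      rw [ht i, ht' i, hwi]
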